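/- Let ρ : ℝ → ℝ be a positive, C¹, L-periodic function with ∫₀^L ρ dx = m > 0. Then the pointwise bound 1/ρ(x) ≤ L ∫₀^L ρ(y) |∂_y(1/ρ)(y)|² dy + 2L/m holds for all x ∈ ℝ. -/

import Mathlib

open intervalIntegral MeasureTheory Set

/-- pointwise upper bound for 1/ρ in terms of ∫ρ|∂_x(1/ρ)|² and the mass. -/
theorem inv_density_bound (L m : ℝ) (hL : 0 < L) (hm : 0 < m) (ρ : ℝ → ℝ)
    (hρ : ContDiff ℝ 1 ρ) (hpos : ∀ x, 0 < ρ x) (hper : Function.Periodic ρ L)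
    (hMass : (∫ x in (0:ℝ)..L, ρ x) = m) :
    ∀ x : ℝ, 1 / ρ x
      ≤ L * (∫ y in (0:ℝ)..L, ρ y * (deriv (fun z => 1 / ρ z) y) ^ 2) + 2 * L / m := by
  intro x
  set f : ℝ → ℝ := fun z => 1 / ρ z with hfdef
  have hne : ∀ z, ρ z ≠ 0 := fun z => (hpos z).ne'
  have hρcont : Continuous ρ := hρ.continuous
  have hfC : ContDiff ℝ 1 f := by
    have := hρ.inv hne
    simp only [hfdef, one_div]
    exact this
  have hfcont : Continuous f := hfC.continuous
  have hfd : Differentiable ℝ f := hfC.differentiable one_ne_zero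
  have hf'cont : Continuous (deriv f) := hfC.continuous_deriv le_rfl
  have hfper : Function.Periodic f L := fun y => by simp [hfdef, hper y]
  -- integrability
  have hIntd : IntervalIntegrable (deriv f) volume 0 L := hf'cont.intervalIntegrable _ _
  have hIntabs : IntervalIntegrable (fun y => |deriv f y|) volume 0 L :=
    hf'cont.abs.intervalIntegrable _ _
  have hIntE : IntervalIntegrable (fun y => ρ y * (deriv f y) ^ 2) volume 0 L :=
    (hρcont.mul (hf'cont.pow 2)).intervalIntegrable _ _
  have hIntinv : IntervalIntegrable f volume 0 L := hfcont.intervalIntegrable _ _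
  set E := ∫ y in (0:ℝ)..L, ρ y * (deriv f y) ^ 2 with hE
  set J := ∫ y in (0:ℝ)..L, f y with hJ
  -- max of f on [0,L]
  obtain ⟨x₀, hx₀mem, hx₀max⟩ :=
    isCompact_Icc.exists_isMaxOn (nonempty_Icc.2 hL.le) (hfcont.continuousOn : ContinuousOn f (Icc 0 L))
  set S := f x₀ with hS
  have hSx : ∀ y, f y ≤ S := by
    intro y
    obtain ⟨z, hz, hzy⟩ := hfper.exists_mem_Ico₀ hL y
    rw [hzy]
    exact hx₀max ⟨hz.1, hz.2.le⟩
  -- mean value point for ρ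
  obtain ⟨a, hamem, hamax⟩ :=
    isCompact_Icc.exists_isMaxOn (nonempty_Icc.2 hL.le) (hρcont.continuousOn : ContinuousOn ρ (Icc 0 L))
  have hma : m ≤ ρ a * L := by
    have h1 : (∫ y in (0:ℝ)..L, ρ y) ≤ ∫ _y in (0:ℝ)..L, ρ a :=
      integral_mono_on hL.le (hρcont.intervalIntegrable _ _) intervalIntegrable_const
        (fun y hy => hamax hy)
    rw [hMass, intervalIntegral.integral_const, smul_eq_mul] at h1
    linarith [h1]
  have hfa : f a ≤ L / m := by
    rw [hfdef]
    rw [div_le_div_iff₀ (hpos a) hm]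
    linarith
  -- pointwise AM-GM bound
  have key : ∀ y ∈ Icc (0:ℝ) L,
      |deriv f y| ≤ (L * (ρ y * (deriv f y) ^ 2) + (1 / L) * f y) / 2 := by
    intro y _
    have h1 : 0 < ρ y := hpos y
    have h2 := sq_nonneg (L * ρ y * |deriv f y| - 1)
    have h3 : |deriv f y| ^ 2 = (deriv f y) ^ 2 := sq_abs _
    have h4 : f y = 1 / ρ y := rfl
    have h6 : (0:ℝ) < ρ y * L := by positivity
    rw [h4, le_div_iff₀ (by norm_num : (0:ℝ) < 2), div_mul_eq_mul_div, one_mul, div_div,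
      ← sub_le_iff_le_add', le_div_iff₀ h6]
    have h8 : (L * ρ y * |deriv f y| - 1) ^ 2
        = (L * ρ y) ^ 2 * (deriv f y) ^ 2 - 2 * (L * ρ y) * |deriv f y| + 1 := by
      rw [← sq_abs (deriv f y)]; ring
    nlinarith [h2, h8]
  -- bound on ∫ |f'|
  have step1 : (∫ y in (0:ℝ)..L, |deriv f y|) ≤ (L * E + (1 / L) * J) / 2 := by
    have h1 : (∫ y in (0:ℝ)..L, |deriv f y|)
        ≤ ∫ y in (0:ℝ)..L, (L * (ρ y * (deriv f y) ^ 2) + (1 / L) * f y) / 2 :=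
      integral_mono_on hL.le hIntabs
        ((((hIntE.const_mul L).add (hIntinv.const_mul (1/L))).div_const 2)) key
    have h2 : (∫ y in (0:ℝ)..L, (L * (ρ y * (deriv f y) ^ 2) + (1 / L) * f y) / 2)
        = (L * E + (1 / L) * J) / 2 := by
      rw [intervalIntegral.integral_div, intervalIntegral.integral_add
        (hIntE.const_mul L) (hIntinv.const_mul (1/L)),
        intervalIntegral.integral_const_mul, intervalIntegral.integral_const_mul]
    linarith [h1, h2 ▸ h1]
  -- J ≤ L * S
  have hJS : J ≤ L * S := by
    have h1 : J ≤ ∫ _y in (0:ℝ)..L, S :=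
      integral_mono_on hL.le hIntinv intervalIntegrable_const (fun y hy => hSx y)
    rw [intervalIntegral.integral_const, smul_eq_mul] at h1
    linarith
  -- FTC bound: S - f a ≤ ∫ |f'|
  have habs : S - f a ≤ ∫ y in (0:ℝ)..L, |deriv f y| := by
    have ftc : ∀ u v : ℝ, f v - f u = ∫ y in u..v, deriv f y := fun u v =>
      (integral_deriv_eq_sub (fun y _ => hfd y) (hf'cont.intervalIntegrable u v)).symm
    rcases le_total a x₀ with h | h
    · calc S - f a = ∫ y in a..x₀, deriv f y := ftc a x₀
        _ ≤ |∫ y in a..x₀, deriv f y| := le_abs_self _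
        _ ≤ ∫ y in a..x₀, |deriv f y| := abs_integral_le_integral_abs h
        _ ≤ ∫ y in (0:ℝ)..L, |deriv f y| :=
          integral_mono_interval hamem.1 h hx₀mem.2
            (Filter.Eventually.of_forall fun y => abs_nonneg _) hIntabs
    · have h1 : f a - S = ∫ y in x₀..a, deriv f y := ftc x₀ a
      have h2 : (∫ y in x₀..a, deriv f y) ≥ -|∫ y in x₀..a, deriv f y| := neg_abs_le _
      calc S - f a = -(f a - S) := by ring
        _ ≤ |∫ y in x₀..a, deriv f y| := by rw [h1]; exact neg_le_abs _
        _ ≤ ∫ y in x₀..a, |deriv f y| := abs_integral_le_integral_abs h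
        _ ≤ ∫ y in (0:ℝ)..L, |deriv f y| :=
          integral_mono_interval hx₀mem.1 h hamem.2
            (Filter.Eventually.of_forall fun y => abs_nonneg _) hIntabs
  -- conclude
  have hfx : f x ≤ S := hSx x
  have hLS : (1 / L) * J ≤ S := by
    have := mul_le_mul_of_nonneg_left hJS (le_of_lt (by positivity : (0:ℝ) < 1 / L))
    calc (1 / L) * J ≤ (1 / L) * (L * S) := this
      _ = S := by field_simp
  show f x ≤ L * E + 2 * L / m
  have h2Lm : 2 * L / m = 2 * (L / m) := by ring
  linarith [hfx, habs, step1, hLS, hfa]
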